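/- With M, h, c₀,…,c₄ and the automorphisms σ_I as in the context, let Γ ⊆ Aut(M) be a subgroup every element of which equals σ_I for some subset I ⊆ {0,1,2,3,4} of even cardinality with I ∩ {0,1} ∈ {∅, {0,1}}, and suppose Γ contains some σ_I with {0,1} ⊆ I. Then the image of c₀ + c₁ in M/2M is fixed by Γ, and c₀ + c₁ ∉ 2M + M^Γ if and only if Γ contains some σ_I with I ∩ {2,3,4} ≠ ∅. -/

import Mathlib

open scoped Matrix

/-- Basis index for `M = ℤ⁶`: `none ↦ e`, `some i ↦ cᵢ`. -/
abbrev Idx := Option (Fin 5)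

/-- `M = ℤ⁶`, the free abelian group on `e, c₀, …, c₄`, as coordinate vectors. -/
abbrev Mlat := Idx → ℤ

/-- The coordinate vector of `h = 2e − (c₀ + c₁ + c₂ + c₃ + c₄)`. -/
def hvec : Mlat := fun r => match r with | none => 2 | some _ => -1

/-- The coordinate vector of the basis element `cᵢ`. -/
def cvec (i : Fin 5) : Mlat := Pi.single (some i) 1

/-- The matrix of the automorphism `σ_I` of `M = ℤ⁶` (in the basis `e, c₀, …, c₄`):
`σ_I` fixes `h = 2e − Σᵢcᵢ`, sends `cᵢ ↦ h − cᵢ` for `i ∈ I`, fixes `cᵢ` for `i ∉ I`,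
and sends `e ↦ e + (|I|/2)·h − Σ_{i∈I} cᵢ`. Columns are the images of the basis
vectors. -/
def sigmaMat (I : Finset (Fin 5)) : Matrix Idx Idx ℤ :=
  Matrix.of fun r c =>
    match c with
    | none =>
      match r with
      | none => 1 + I.card
      | some j => -((I.card : ℤ) / 2) - (if j ∈ I then 1 else 0)
    | some i =>
      if i ∈ I then
        match r with
        | none => 2
        | some j => if j = i then -2 else -1
      else
        match r with
        | none => 0
        | some j => if j = i then 1 else 0


/-- The class of `c₀ + c₁` in `M/2M`. -/
def c01bar : Idx → ZMod 2 := fun r => (((cvec 0 + cvec 1) r : ℤ) : ZMod 2)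

/-- If `w` is fixed by `σ_I` with `I` of even cardinality and `j ∈ I`, then the
`cⱼ`-coordinate of `w` is `-(e-coordinate)/2`. -/
theorem sigma_fixed_coord (I : Finset (Fin 5)) (hI : Even I.card) (w : Mlat)
    (hw : sigmaMat I *ᵥ w = w) {j : Fin 5} (hj : j ∈ I) :
    2 * w (some j) = - w none := by
  have h0 := congrFun hw none
  have h1 := congrFun hw (some j)
  simp [Matrix.mulVec, dotProduct, sigmaMat, Fintype.sum_option, hj] at h0 h1
  have h2 : (∑ x : Fin 5, if x ∈ I then (if j = x then -(2*w (some x)) else -w (some x))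
      else (if j = x then w (some x) else 0)) =
      ∑ x ∈ Finset.univ ∩ I, (if j = x then -(2*w (some x)) else -w (some x)) := by
    rw [← Finset.sum_ite_mem]
    refine Finset.sum_congr rfl fun x _ => ?_
    by_cases hx : x ∈ I
    · simp [hx]
    · have : j ≠ x := fun h => hx (h ▸ hj)
      simp [hx, this]
  rw [Finset.univ_inter] at h2
  have h3 : (∑ x ∈ I, (if j = x then -(2*w (some x)) else -w (some x))) =
      (∑ x ∈ I, -w (some x)) + ∑ x ∈ I, (if j = x then -(w (some x)) else 0) := by
    rw [← Finset.sum_add_distrib]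
    refine Finset.sum_congr rfl fun x _ => ?_
    by_cases hx : j = x
    · simp [hx]; ring
    · simp [hx]
  rw [h2, h3, Finset.sum_ite_eq, if_pos hj] at h1
  obtain ⟨k, hk⟩ := hI
  have hck : (I.card : ℤ) = k + k := by exact_mod_cast congrArg Nat.cast hk
  have hdiv : (I.card : ℤ) / 2 = k := by omega
  rw [hck] at h0
  rw [hdiv] at h1
  have hS : ∑ x ∈ I, -w (some x) = -∑ x ∈ I, w (some x) := by
    rw [Finset.sum_neg_distrib]
  rw [hS] at h1
  set S := ∑ x ∈ I, w (some x) with hSdef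
  have hS2 : ∑ x ∈ I, 2 * w (some x) = 2 * S := by rw [hSdef, Finset.mul_sum]
  rw [hS2] at h0
  set a := w none with ha
  have e1 : 2 * ((k:ℤ) * a) + 2 * S = 0 := by linear_combination h0
  have e2 : -((k:ℤ) * a) - a - S - 2 * w (some j) = 0 := by linear_combination h1
  generalize (k:ℤ) * a = t at e1 e2
  omega

theorem sigma_fixes_c01bar : ∀ I : Finset (Fin 5),
    (I ∩ {0, 1} = ∅ ∨ I ∩ {0, 1} = {0, 1}) →
    ((sigmaMat I).map (Int.cast : ℤ → ZMod 2)) *ᵥ c01bar = c01bar := by decide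

theorem small_cases : ∀ I : Finset (Fin 5), Even I.card →
    (I ∩ {0, 1} = ∅ ∨ I ∩ {0, 1} = {0, 1}) →
    I ∩ {2, 3, 4} = ∅ → I = ∅ ∨ I = {0, 1} := by decide

/-- The fixed vector `h − c₂ − c₃ − c₄`. -/
def wfix : Mlat := fun r => match r with
  | none => 2 | some 0 => -1 | some 1 => -1 | some _ => -2

/-- `m = c₀ + ⋯ + c₄ − e` with `c₀ + c₁ = 2m + wfix`. -/
def mvec : Mlat := fun r => match r with | none => -1 | some _ => 1

theorem wfix_fixed : sigmaMat ∅ *ᵥ wfix = wfix ∧ sigmaMat {0,1} *ᵥ wfix = wfix := by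
  decide

theorem c01_decomp : cvec 0 + cvec 1 = 2 • mvec + wfix := by decide

/-- Let `Γ ⊆ Aut(M)` be a subgroup every element of which is some `σ_I` with `I` of even
cardinality and `I ∩ {0,1} ∈ {∅, {0,1}}`, and suppose `Γ` contains some `σ_I` with
`{0,1} ⊆ I`. Then the image of `c₀ + c₁` in `M/2M` is fixed by `Γ`, and
`c₀ + c₁ ∉ 2M + M^Γ` if and only if `Γ` contains some `σ_I` with `I ∩ {2,3,4} ≠ ∅`. -/
theorem c01_fixed_and_nontrivial_iff (Γ : Subgroup (Matrix Idx Idx ℤ)ˣ)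
    (hΓ : ∀ u ∈ Γ, ∃ I : Finset (Fin 5), Even I.card ∧
      (I ∩ {0, 1} = ∅ ∨ I ∩ {0, 1} = {0, 1}) ∧ (u : Matrix Idx Idx ℤ) = sigmaMat I)
    (hex : ∃ u ∈ Γ, ∃ I : Finset (Fin 5), Even I.card ∧ {0, 1} ⊆ I ∧
      (u : Matrix Idx Idx ℤ) = sigmaMat I) :
    (∀ u ∈ Γ, ((u : Matrix Idx Idx ℤ).map (Int.cast : ℤ → ZMod 2)) *ᵥ c01bar = c01bar) ∧
    ((¬ ∃ m w : Mlat, (∀ u ∈ Γ, (u : Matrix Idx Idx ℤ) *ᵥ w = w) ∧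
        cvec 0 + cvec 1 = 2 • m + w) ↔
      ∃ u ∈ Γ, ∃ I : Finset (Fin 5), Even I.card ∧ (u : Matrix Idx Idx ℤ) = sigmaMat I ∧
        (I ∩ {2, 3, 4}).Nonempty) := by
  constructor
  · intro u hu
    obtain ⟨I, _, hI01, hM⟩ := hΓ u hu
    rw [hM]
    exact sigma_fixes_c01bar I hI01
  constructor
  · intro hne
    by_contra hno
    push_neg at hno
    apply hne
    refine ⟨mvec, wfix, ?_, c01_decomp⟩
    intro u hu
    obtain ⟨I, hIe, hI01, hM⟩ := hΓ u hu
    have h234 : I ∩ {2, 3, 4} = ∅ := by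
      by_contra h
      exact h (hno u hu I hIe hM)
    rcases small_cases I hIe hI01 h234 with h | h
    · rw [hM, h]; exact wfix_fixed.1
    · rw [hM, h]; exact wfix_fixed.2
  · rintro ⟨u, hu, J, hJe, hJM, hJne⟩ ⟨m, w, hfix, heq⟩
    obtain ⟨v, hv, I, hIe, hIsub, hIM⟩ := hex
    obtain ⟨j, hj⟩ := hJne
    have hjJ : j ∈ J := (Finset.mem_inter.mp hj).1
    have hj234 : j ∈ ({2, 3, 4} : Finset (Fin 5)) := (Finset.mem_inter.mp hj).2
    have h0I : (0 : Fin 5) ∈ I := hIsub (by decide)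
    have hwI : sigmaMat I *ᵥ w = w := by rw [← hIM]; exact hfix v hv
    have hwJ : sigmaMat J *ᵥ w = w := by rw [← hJM]; exact hfix u hu
    have k1 := sigma_fixed_coord I hIe w hwI h0I
    have k2 := sigma_fixed_coord J hJe w hwJ hjJ
    have e0 := congrFun heq (some 0)
    have ej := congrFun heq (some j)
    have hcv0 : (cvec 0 + cvec 1) (some 0) = 1 := by decide
    have hcvj : (cvec 0 + cvec 1) (some j) = 0 :=
      (by decide : ∀ x : Fin 5, x ∈ ({2, 3, 4} : Finset (Fin 5)) →
        (cvec 0 + cvec 1) (some x) = 0) j hj234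
    rw [hcv0] at e0
    rw [hcvj] at ej
    have e0' : (1:ℤ) = m (some 0) + m (some 0) + w (some 0) := by
      simpa [two_smul] using e0
    have ej' : (0:ℤ) = m (some j) + m (some j) + w (some j) := by
      simpa [two_smul] using ej
    omega
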